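/- Let X₁,…,Xₙ be mutually independent integrable random vectors in ℝ^p and let 2 ≤ k₀ ≤ n−2 be such that E[X_i] = μ for 1 ≤ i ≤ k₀ and E[X_i] = μ + Δ for k₀+1 ≤ i ≤ n (a single change in mean at time k₀). Then the statistic G_n(k₀) = (2/(k₀(k₀−1))) Σ_{1≤i<j≤k₀} X_i·X_j + (2/((n−k₀)(n−k₀−1))) Σ_{k₀+1≤i<j≤n} X_i·X_j − (2/(k₀(n−k₀))) Σ_{i=1}^{k₀} Σ_{j=k₀+1}^{n} X_i·X_j satisfies E[G_n(k₀)] = ‖Δ‖₂². In particular E[G_n(k₀)] > 0 whenever Δ ≠ 0. -/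

import Mathlib

open MeasureTheory ProbabilityTheory
open scoped RealInnerProductSpace BigOperators

lemma pair_int {Ω : Type*} [MeasurableSpace Ω] (P : Measure Ω) [IsProbabilityMeasure P] {p : ℕ}
    (f g : Ω → EuclideanSpace ℝ (Fin p)) (hf : Integrable f P) (hg : Integrable g P)
    (h : IndepFun f g P) :
    Integrable (fun ω => ⟪f ω, g ω⟫) P ∧
      ∫ ω, ⟪f ω, g ω⟫ ∂P = ⟪∫ ω, f ω ∂P, ∫ ω, g ω ∂P⟫ := by
  have hfc : ∀ t, Integrable (fun ω => f ω t) P := fun t =>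
    (EuclideanSpace.proj (𝕜 := ℝ) t).integrable_comp hf
  have hgc : ∀ t, Integrable (fun ω => g ω t) P := fun t =>
    (EuclideanSpace.proj (𝕜 := ℝ) t).integrable_comp hg
  have hind : ∀ t : Fin p, IndepFun (fun ω => f ω t) (fun ω => g ω t) P := fun t =>
    h.comp (EuclideanSpace.proj (𝕜 := ℝ) t).measurable (EuclideanSpace.proj (𝕜 := ℝ) t).measurable
  have hinner : ∀ ω, ⟪f ω, g ω⟫ = ∑ t, f ω t * g ω t := by
    intro ω
    simp [PiLp.inner_apply, RCLike.inner_apply, mul_comm]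
  have hmul : ∀ t : Fin p, Integrable (fun ω => f ω t * g ω t) P := fun t => by
    exact (hind t).integrable_mul (hfc t) (hgc t)
  constructor
  · simp_rw [hinner]
    exact integrable_finset_sum _ fun t _ => hmul t
  · simp_rw [hinner]
    rw [integral_finset_sum _ fun t _ => hmul t]
    rw [show ⟪∫ ω, f ω ∂P, ∫ ω, g ω ∂P⟫ = ∑ t, (∫ ω, f ω ∂P) t * (∫ ω, g ω ∂P) t from by
      simp [PiLp.inner_apply, RCLike.inner_apply, mul_comm]]
    refine Finset.sum_congr rfl fun t _ => ?_
    rw [show ∫ (a : Ω), f a t * g a t ∂P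
        = (∫ ω, f ω t ∂P) * ∫ ω, g ω t ∂P from by
      exact (hind t).integral_fun_mul_eq_mul_integral (hfc t).aestronglyMeasurable
        (hgc t).aestronglyMeasurable]
    congr 1
    · simpa using ((EuclideanSpace.proj (𝕜 := ℝ) t).integral_comp_comm hf)
    · simpa using ((EuclideanSpace.proj (𝕜 := ℝ) t).integral_comp_comm hg)

lemma count_lt (s : Finset ℕ) (c : ℝ) :
    ∑ i ∈ s, ∑ j ∈ s, (if i < j then c else 0)
      = (s.card : ℝ) * ((s.card : ℝ) - 1) / 2 * c := by
  have h1 : ∑ i ∈ s, ∑ j ∈ s, (if i < j then (1:ℝ) else 0)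
      = (s.card : ℝ) * ((s.card : ℝ) - 1) / 2 := by
    have hswap : ∑ i ∈ s, ∑ j ∈ s, (if i < j then (1:ℝ) else 0)
        = ∑ i ∈ s, ∑ j ∈ s, (if j < i then (1:ℝ) else 0) := Finset.sum_comm
    have h2 : ∑ i ∈ s, ∑ j ∈ s, ((if i < j then (1:ℝ) else 0) + (if j < i then (1:ℝ) else 0))
        = (s.card : ℝ) * (s.card : ℝ) - s.card := by
      have hrow : ∀ i ∈ s, ∑ j ∈ s,
          ((if i < j then (1:ℝ) else 0) + (if j < i then (1:ℝ) else 0)) = (s.card : ℝ) - 1 := by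
        intro i hi
        have hpt : ∀ j : ℕ, ((if i < j then (1:ℝ) else 0) + (if j < i then (1:ℝ) else 0))
            = 1 - (if j = i then (1:ℝ) else 0) := by
          intro j
          rcases lt_trichotomy i j with h | h | h
          · simp [h, not_lt.2 h.le, h.ne']
          · simp [h]
          · simp [h, not_lt.2 h.le, h.ne]
        simp_rw [hpt]
        rw [Finset.sum_sub_distrib, Finset.sum_const, Finset.sum_ite_eq' s i (fun _ => (1:ℝ))]
        simp [hi]
      rw [Finset.sum_congr rfl hrow, Finset.sum_const, nsmul_eq_mul]
      ring
    rw [Finset.sum_congr rfl (fun i _ => Finset.sum_add_distrib)] at h2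
    rw [Finset.sum_add_distrib, ← hswap] at h2
    linarith
  have : ∀ i j : ℕ, (if i < j then c else 0) = (if i < j then (1:ℝ) else 0) * c := by
    intro i j; split <;> simp
  simp_rw [this, ← Finset.sum_mul]
  rw [h1]

/-- If `X₁,…,Xₙ` are mutually independent integrable random vectors in `ℝ^p` with
a single change in mean at time `k₀` (mean `μ` before, `μ + Δ` after), then
`E[G_n(k₀)] = ‖Δ‖₂²`; in particular `E[G_n(k₀)] > 0` whenever `Δ ≠ 0`. -/
theorem stmt_5 {Ω : Type*} [MeasurableSpace Ω] (P : Measure Ω) [IsProbabilityMeasure P]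
    (p n : ℕ) (X : ℕ → Ω → EuclideanSpace ℝ (Fin p))
    (μ Δ : EuclideanSpace ℝ (Fin p))
    (k₀ : ℕ) (hk₀ : 2 ≤ k₀) (hk₀n : k₀ ≤ n - 2)
    (hint : ∀ i ∈ Finset.Icc 1 n, Integrable (X i) P)
    (hindep : iIndepFun
      (fun i : (Finset.Icc 1 n : Finset ℕ) => X i.val) P)
    (hmean₁ : ∀ i ∈ Finset.Icc 1 k₀, ∫ ω, X i ω ∂P = μ)
    (hmean₂ : ∀ i ∈ Finset.Icc (k₀+1) n, ∫ ω, X i ω ∂P = μ + Δ) :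
    (∫ ω,
      ((2 / ((k₀ : ℝ) * ((k₀ : ℝ) - 1))) *
          (∑ i ∈ Finset.Icc 1 k₀, ∑ j ∈ Finset.Icc 1 k₀, if i < j then ⟪X i ω, X j ω⟫ else 0)
        + (2 / (((n : ℝ) - k₀) * ((n : ℝ) - k₀ - 1))) *
          (∑ i ∈ Finset.Icc (k₀+1) n, ∑ j ∈ Finset.Icc (k₀+1) n,
            if i < j then ⟪X i ω, X j ω⟫ else 0)
        - (2 / ((k₀ : ℝ) * ((n : ℝ) - k₀))) *
          (∑ i ∈ Finset.Icc 1 k₀, ∑ j ∈ Finset.Icc (k₀+1) n, ⟪X i ω, X j ω⟫)) ∂P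
      = ‖Δ‖ ^ 2)
    ∧ (Δ ≠ 0 →
      0 < ∫ ω,
        ((2 / ((k₀ : ℝ) * ((k₀ : ℝ) - 1))) *
            (∑ i ∈ Finset.Icc 1 k₀, ∑ j ∈ Finset.Icc 1 k₀, if i < j then ⟪X i ω, X j ω⟫ else 0)
          + (2 / (((n : ℝ) - k₀) * ((n : ℝ) - k₀ - 1))) *
            (∑ i ∈ Finset.Icc (k₀+1) n, ∑ j ∈ Finset.Icc (k₀+1) n,
              if i < j then ⟪X i ω, X j ω⟫ else 0)
          - (2 / ((k₀ : ℝ) * ((n : ℝ) - k₀))) *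
            (∑ i ∈ Finset.Icc 1 k₀, ∑ j ∈ Finset.Icc (k₀+1) n, ⟪X i ω, X j ω⟫)) ∂P) := by
  have hn : k₀ + 2 ≤ n := by omega
  have hs₁ : Finset.Icc 1 k₀ ⊆ Finset.Icc 1 n := Finset.Icc_subset_Icc le_rfl (by omega)
  have hs₂ : Finset.Icc (k₀+1) n ⊆ Finset.Icc 1 n := Finset.Icc_subset_Icc (by omega) le_rfl
  have key : ∀ i ∈ Finset.Icc 1 n, ∀ j ∈ Finset.Icc 1 n, i ≠ j →
      Integrable (fun ω => ⟪X i ω, X j ω⟫) P ∧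
      ∫ ω, ⟪X i ω, X j ω⟫ ∂P = ⟪∫ ω, X i ω ∂P, ∫ ω, X j ω ∂P⟫ := by
    intro i hi j hj hij
    exact pair_int P (X i) (X j) (hint i hi) (hint j hj)
      (hindep.indepFun (i := ⟨i, hi⟩) (j := ⟨j, hj⟩) (by simpa [Subtype.ext_iff] using hij))
  have hIte : ∀ i ∈ Finset.Icc 1 n, ∀ j ∈ Finset.Icc 1 n,
      Integrable (fun ω => if i < j then ⟪X i ω, X j ω⟫ else 0) P := by
    intro i hi j hj
    by_cases h : i < j
    · simpa [h] using (key i hi j hj h.ne).1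
    · simp only [h, if_false]
      exact integrable_const (0:ℝ)
  -- Integrability of the three blocks
  have hI1 : Integrable (fun ω => ∑ i ∈ Finset.Icc 1 k₀, ∑ j ∈ Finset.Icc 1 k₀,
      if i < j then ⟪X i ω, X j ω⟫ else 0) P :=
    integrable_finset_sum _ fun i hi => integrable_finset_sum _ fun j hj =>
      hIte i (hs₁ hi) j (hs₁ hj)
  have hI2 : Integrable (fun ω => ∑ i ∈ Finset.Icc (k₀+1) n, ∑ j ∈ Finset.Icc (k₀+1) n,
      if i < j then ⟪X i ω, X j ω⟫ else 0) P :=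
    integrable_finset_sum _ fun i hi => integrable_finset_sum _ fun j hj =>
      hIte i (hs₂ hi) j (hs₂ hj)
  have hne₁₂ : ∀ i ∈ Finset.Icc 1 k₀, ∀ j ∈ Finset.Icc (k₀+1) n, i ≠ j := by
    intro i hi j hj
    simp only [Finset.mem_Icc] at hi hj
    omega
  have hI3 : Integrable (fun ω => ∑ i ∈ Finset.Icc 1 k₀, ∑ j ∈ Finset.Icc (k₀+1) n,
      ⟪X i ω, X j ω⟫) P :=
    integrable_finset_sum _ fun i hi => integrable_finset_sum _ fun j hj =>
      (key i (hs₁ hi) j (hs₂ hj) (hne₁₂ i hi j hj)).1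
  -- Cardinalities
  have hc₁ : ((Finset.Icc 1 k₀).card : ℝ) = (k₀ : ℝ) := by
    rw [Nat.card_Icc]; simp
  have hc₂ : ((Finset.Icc (k₀+1) n).card : ℝ) = (n : ℝ) - (k₀ : ℝ) := by
    rw [Nat.card_Icc, Nat.cast_sub (by omega : k₀ + 1 ≤ n + 1)]
    push_cast; ring
  -- Value of block 1
  have e1 : ∫ ω, (∑ i ∈ Finset.Icc 1 k₀, ∑ j ∈ Finset.Icc 1 k₀,
      if i < j then ⟪X i ω, X j ω⟫ else 0) ∂P
      = (k₀ : ℝ) * ((k₀ : ℝ) - 1) / 2 * ⟪μ, μ⟫ := by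
    rw [integral_finset_sum _ fun i hi => integrable_finset_sum _ fun j hj =>
      hIte i (hs₁ hi) j (hs₁ hj)]
    rw [Finset.sum_congr rfl fun i hi => integral_finset_sum _ fun j hj =>
      hIte i (hs₁ hi) j (hs₁ hj)]
    rw [Finset.sum_congr rfl fun i hi => Finset.sum_congr rfl fun j hj =>
      (show ∫ ω, (if i < j then ⟪X i ω, X j ω⟫ else 0) ∂P = if i < j then ⟪μ, μ⟫ else 0 from by
        by_cases h : i < j
        · simp only [h, if_true]
          rw [(key i (hs₁ hi) j (hs₁ hj) h.ne).2, hmean₁ i hi, hmean₁ j hj]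
        · simp [h])]
    rw [count_lt, hc₁]
  -- Value of block 2
  have e2 : ∫ ω, (∑ i ∈ Finset.Icc (k₀+1) n, ∑ j ∈ Finset.Icc (k₀+1) n,
      if i < j then ⟪X i ω, X j ω⟫ else 0) ∂P
      = ((n : ℝ) - k₀) * (((n : ℝ) - k₀) - 1) / 2 * ⟪μ + Δ, μ + Δ⟫ := by
    rw [integral_finset_sum _ fun i hi => integrable_finset_sum _ fun j hj =>
      hIte i (hs₂ hi) j (hs₂ hj)]
    rw [Finset.sum_congr rfl fun i hi => integral_finset_sum _ fun j hj =>
      hIte i (hs₂ hi) j (hs₂ hj)]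
    rw [Finset.sum_congr rfl fun i hi => Finset.sum_congr rfl fun j hj =>
      (show ∫ ω, (if i < j then ⟪X i ω, X j ω⟫ else 0) ∂P = if i < j then ⟪μ + Δ, μ + Δ⟫ else 0
        from by
        by_cases h : i < j
        · simp only [h, if_true]
          rw [(key i (hs₂ hi) j (hs₂ hj) h.ne).2, hmean₂ i hi, hmean₂ j hj]
        · simp [h])]
    rw [count_lt, hc₂]
  -- Value of block 3
  have e3 : ∫ ω, (∑ i ∈ Finset.Icc 1 k₀, ∑ j ∈ Finset.Icc (k₀+1) n, ⟪X i ω, X j ω⟫) ∂P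
      = (k₀ : ℝ) * ((n : ℝ) - k₀) * ⟪μ, μ + Δ⟫ := by
    rw [integral_finset_sum _ fun i hi => integrable_finset_sum _ fun j hj =>
      (key i (hs₁ hi) j (hs₂ hj) (hne₁₂ i hi j hj)).1]
    rw [Finset.sum_congr rfl fun i hi => integral_finset_sum _ fun j hj =>
      (key i (hs₁ hi) j (hs₂ hj) (hne₁₂ i hi j hj)).1]
    rw [Finset.sum_congr rfl fun i hi => Finset.sum_congr rfl fun j hj =>
      (show ∫ ω, ⟪X i ω, X j ω⟫ ∂P = ⟪μ, μ + Δ⟫ from by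
        rw [(key i (hs₁ hi) j (hs₂ hj) (hne₁₂ i hi j hj)).2, hmean₁ i hi, hmean₂ j hj])]
    rw [Finset.sum_const, Finset.sum_const, smul_smul, nsmul_eq_mul]
    push_cast [hc₁, hc₂]
    ring
  -- Real-number facts
  have ha : (2 : ℝ) ≤ (k₀ : ℝ) := by exact_mod_cast hk₀
  have hb : (2 : ℝ) ≤ (n : ℝ) - k₀ := by
    have : (k₀ : ℝ) + 2 ≤ (n : ℝ) := by exact_mod_cast hn
    linarith
  have ha0 : (k₀ : ℝ) ≠ 0 := by linarith
  have ha1 : (k₀ : ℝ) - 1 ≠ 0 := by linarith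
  have hb0 : (n : ℝ) - k₀ ≠ 0 := by linarith
  have hb1 : (n : ℝ) - k₀ - 1 ≠ 0 := by linarith
  have hmain : (∫ ω,
      ((2 / ((k₀ : ℝ) * ((k₀ : ℝ) - 1))) *
          (∑ i ∈ Finset.Icc 1 k₀, ∑ j ∈ Finset.Icc 1 k₀, if i < j then ⟪X i ω, X j ω⟫ else 0)
        + (2 / (((n : ℝ) - k₀) * ((n : ℝ) - k₀ - 1))) *
          (∑ i ∈ Finset.Icc (k₀+1) n, ∑ j ∈ Finset.Icc (k₀+1) n,
            if i < j then ⟪X i ω, X j ω⟫ else 0)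
        - (2 / ((k₀ : ℝ) * ((n : ℝ) - k₀))) *
          (∑ i ∈ Finset.Icc 1 k₀, ∑ j ∈ Finset.Icc (k₀+1) n, ⟪X i ω, X j ω⟫)) ∂P)
      = ‖Δ‖ ^ 2 := by
    have hA : Integrable (fun ω => (2 / ((k₀ : ℝ) * ((k₀ : ℝ) - 1))) *
        (∑ i ∈ Finset.Icc 1 k₀, ∑ j ∈ Finset.Icc 1 k₀,
          if i < j then ⟪X i ω, X j ω⟫ else 0)) P := hI1.const_mul _
    have hB : Integrable (fun ω => (2 / (((n : ℝ) - k₀) * ((n : ℝ) - k₀ - 1))) *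
        (∑ i ∈ Finset.Icc (k₀+1) n, ∑ j ∈ Finset.Icc (k₀+1) n,
          if i < j then ⟪X i ω, X j ω⟫ else 0)) P := hI2.const_mul _
    have hC : Integrable (fun ω => (2 / ((k₀ : ℝ) * ((n : ℝ) - k₀))) *
        (∑ i ∈ Finset.Icc 1 k₀, ∑ j ∈ Finset.Icc (k₀+1) n, ⟪X i ω, X j ω⟫)) P :=
      hI3.const_mul _
    have hAB : Integrable (fun ω => (2 / ((k₀ : ℝ) * ((k₀ : ℝ) - 1))) *
        (∑ i ∈ Finset.Icc 1 k₀, ∑ j ∈ Finset.Icc 1 k₀,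
          if i < j then ⟪X i ω, X j ω⟫ else 0)
        + (2 / (((n : ℝ) - k₀) * ((n : ℝ) - k₀ - 1))) *
        (∑ i ∈ Finset.Icc (k₀+1) n, ∑ j ∈ Finset.Icc (k₀+1) n,
          if i < j then ⟪X i ω, X j ω⟫ else 0)) P := hA.add hB
    rw [integral_sub hAB hC, integral_add hA hB,
      integral_const_mul, integral_const_mul, integral_const_mul, e1, e2, e3]
    have hfin : ⟪μ, μ⟫ + ⟪μ + Δ, μ + Δ⟫ - 2 * ⟪μ, μ + Δ⟫ = ‖Δ‖ ^ 2 := by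
      have h := norm_sub_sq_real μ (μ + Δ)
      have h2 : μ - (μ + Δ) = -Δ := by abel
      rw [h2, norm_neg] at h
      rw [real_inner_self_eq_norm_sq, real_inner_self_eq_norm_sq]
      linarith
    rw [← hfin]
    field_simp
  exact ⟨hmain, fun hΔ => by
    rw [hmain]
    have : 0 < ‖Δ‖ := norm_pos_iff.2 hΔ
    positivity⟩
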